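/- Let (Ω,𝓕,P) be a nonatomic probability space and M = {x ∈ L⁰(𝓕) : there exists a real number m_x > 0 such that x > m_x a.e.}. Then M is L⁰-convex (ξx+(1−ξ)y ∈ M for all x,y ∈ M and ξ ∈ L⁰₊(𝓕) with 0 ≤ ξ ≤ 1), M is open in the locally L⁰-convex topology of L⁰(𝓕) (for every y ∈ M there is ε ∈ L⁰₊₊(𝓕) with {z ∈ L⁰(𝓕) : |z−y| ≤ ε} ⊆ M), and M is closed in the locally L⁰-convex topology of L⁰(𝓕) (for every y ∉ M there is ε ∈ L⁰₊₊(𝓕) with {z ∈ L⁰(𝓕) : |z−y| ≤ ε} ∩ M = ∅). -/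
import Mathlib


open MeasureTheory Filter

/-- The set `M = {x ∈ L⁰(𝓕) : x > m_x a.e. for some real m_x > 0}`. -/
def Mset {Ω : Type*} [MeasurableSpace Ω] (P : Measure Ω) : Set (Ω →ₘ[P] ℝ) :=
  {x | ∃ m : ℝ, 0 < m ∧ ∀ᵐ ω ∂P, m < x ω}

/-- From a positive-measure set and an a.e. property, get a point in the set with the property. -/
lemma exists_mem_of_pos {Ω : Type*} [MeasurableSpace Ω] {P : Measure Ω} {B : Set Ω}
    (hB : P B ≠ 0) {Q : Ω → Prop} (h : ∀ᵐ ω ∂P, Q ω) : ∃ ω ∈ B, Q ω := by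
  by_contra hc
  push_neg at hc
  exact hB (measure_mono_null (fun ω hω => hc ω hω) (ae_iff.mp h))

/-- Over a nonatomic probability space, the set
`M = {x ∈ L⁰(𝓕) : ∃ m_x > 0, x > m_x a.e.}` is `L⁰`-convex, open in the locally `L⁰`-convex
topology of `L⁰(𝓕)`, and closed in the locally `L⁰`-convex topology of `L⁰(𝓕)`. -/
theorem stmt8
    {Ω : Type*} [MeasurableSpace Ω] {P : Measure Ω} [IsProbabilityMeasure P]
    -- `(Ω,𝓕,P)` is nonatomic
    (hnonatomic : ∀ A : Set Ω, MeasurableSet A → 0 < P A →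
      ∃ B ⊆ A, MeasurableSet B ∧ 0 < P B ∧ P B < P A) :
    -- `M` is `L⁰`-convex
    (∀ x ∈ Mset P, ∀ y ∈ Mset P, ∀ ξ : Ω →ₘ[P] ℝ,
      (∀ᵐ ω ∂P, 0 ≤ ξ ω ∧ ξ ω ≤ 1) → ξ * x + (1 - ξ) * y ∈ Mset P) ∧
    -- `M` is `𝒯_c`-open
    (∀ y ∈ Mset P, ∃ ε : Ω →ₘ[P] ℝ, (∀ᵐ ω ∂P, 0 < ε ω) ∧
      ∀ z : Ω →ₘ[P] ℝ, (∀ᵐ ω ∂P, |z ω - y ω| ≤ ε ω) → z ∈ Mset P) ∧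
    -- `M` is `𝒯_c`-closed
    (∀ y : Ω →ₘ[P] ℝ, y ∉ Mset P → ∃ ε : Ω →ₘ[P] ℝ, (∀ᵐ ω ∂P, 0 < ε ω) ∧
      ∀ z : Ω →ₘ[P] ℝ, (∀ᵐ ω ∂P, |z ω - y ω| ≤ ε ω) → z ∉ Mset P) := by
  refine ⟨?_, ?_, ?_⟩
  · -- Convexity
    rintro x ⟨mx, hmx, hx⟩ y ⟨my, hmy, hy⟩ ξ hξ
    refine ⟨min mx my, lt_min hmx hmy, ?_⟩
    have h1 := (ξ * x + (1 - ξ) * y).coeFn_add -- dummy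
    filter_upwards [hx, hy, hξ, AEEqFun.coeFn_add (ξ * x) ((1 - ξ) * y),
      AEEqFun.coeFn_mul ξ x, AEEqFun.coeFn_mul (1 - ξ) y, AEEqFun.coeFn_sub 1 ξ,
      AEEqFun.coeFn_one (β := ℝ) (μ := P)] with ω hxω hyω hξω hadd hmul1 hmul2 hsub hone
    rw [hadd, Pi.add_apply, hmul1, hmul2, Pi.mul_apply, Pi.mul_apply, hsub, Pi.sub_apply, hone,
      Pi.one_apply]
    obtain ⟨h0, h1'⟩ := hξω
    have hxm : min mx my < x ω := lt_of_le_of_lt (min_le_left _ _) hxω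
    have hym : min mx my < y ω := lt_of_le_of_lt (min_le_right _ _) hyω
    rcases eq_or_lt_of_le h0 with h0' | h0'
    · rw [← h0']; simpa using hym
    · have e1 : 0 < ξ ω * (x ω - min mx my) := mul_pos h0' (sub_pos.mpr hxm)
      have e2 : 0 ≤ (1 - ξ ω) * (y ω - min mx my) :=
        mul_nonneg (sub_nonneg.mpr h1') (le_of_lt (sub_pos.mpr hym))
      nlinarith
  · -- Open
    rintro y ⟨m, hm, hy⟩
    refine ⟨AEEqFun.const Ω (m / 2), ?_, ?_⟩
    · filter_upwards [AEEqFun.coeFn_const (β := ℝ) (μ := P) Ω (m / 2)] with ω hc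
      rw [hc]; simp only [Function.const_apply]; positivity
    · intro z hz
      refine ⟨m / 2, by positivity, ?_⟩
      filter_upwards [hy, hz, AEEqFun.coeFn_const (β := ℝ) (μ := P) Ω (m / 2)] with ω h1 h2 h3
      rw [h3] at h2
      have := abs_le.mp h2
      simp only [Function.const_apply] at this ⊢
      linarith [this.1]
  · -- Closed
    intro y hy
    classical
    -- measurable representative of y
    obtain ⟨g, hgm, hgy⟩ : ∃ g : Ω → ℝ, Measurable g ∧ (⇑y : Ω → ℝ) =ᵐ[P] g := by
      have h := y.aestronglyMeasurable
      exact ⟨h.mk y, h.stronglyMeasurable_mk.measurable, h.ae_eq_mk⟩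
    set A : Set Ω := {ω | g ω ≤ 0} with hA
    have hAm : MeasurableSet A := measurableSet_le hgm measurable_const
    -- baseline positive measurable function
    set w : Ω → ℝ := fun ω => if 0 < g ω then g ω / 2 else 1 with hw
    have hwm : Measurable w := Measurable.ite (measurableSet_lt measurable_const hgm)
      (hgm.div_const 2) measurable_const
    have hwpos : ∀ ω, 0 < w ω := by
      intro ω; simp only [hw]
      split_ifs with h
      · linarith
      · norm_num
    by_cases hPA : P A = 0
    · -- y > 0 a.e., take ε = w (= g/2 a.e.)
      refine ⟨AEEqFun.mk w hwm.aestronglyMeasurable, ?_, ?_⟩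
      · filter_upwards [AEEqFun.coeFn_mk w hwm.aestronglyMeasurable] with ω hc
        rw [hc]; exact hwpos ω
      · rintro z hz ⟨m, hm, hzM⟩
        -- y not in M at level 2m/3
        have hyT : ¬ ∀ᵐ ω ∂P, 2 * m / 3 < y ω := fun h => hy ⟨2 * m / 3, by linarith, h⟩
        have hT : P {ω | ¬ (2 * m / 3 < y ω)} ≠ 0 := fun h => hyT (ae_iff.mpr h)
        have hgpos : ∀ᵐ ω ∂P, 0 < g ω := by
          have : ∀ᵐ ω ∂P, ω ∉ A := by
            rw [ae_iff]; simpa using hPA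
          filter_upwards [this] with ω hω
          simpa [hA, not_le] using hω
        have hae : ∀ᵐ ω ∂P, ¬ (2 * m / 3 < y ω) →
            False := by
          filter_upwards [hz, hzM, hgpos, hgy,
            AEEqFun.coeFn_mk w hwm.aestronglyMeasurable] with ω h1 h2 h3 h4 h5 h6
          rw [h5] at h1
          have hwω : w ω = g ω / 2 := by simp [hw, h3]
          rw [hwω, h4] at h1
          have := abs_le.mp h1
          push_neg at h6
          -- z ω ≤ y ω + y ω / 2 ≤ m < z ω
          nlinarith [this.2]
        obtain ⟨ω, hω1, hω2⟩ := exists_mem_of_pos hT hae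
        exact hω2 hω1
    · -- P A > 0 : build disjoint positive-measure subsets of A
      have key : ∀ S : Set Ω, ∃ B : Set Ω, MeasurableSet S → 0 < P S →
          (B ⊆ S ∧ MeasurableSet B ∧ 0 < P B ∧ 0 < P (S \ B)) := by
        intro S
        by_cases hS : MeasurableSet S ∧ 0 < P S
        · obtain ⟨B, hBS, hBm, hB0, hBlt⟩ := hnonatomic S hS.1 hS.2
          refine ⟨B, fun _ _ => ⟨hBS, hBm, hB0, ?_⟩⟩
          rw [measure_diff hBS hBm.nullMeasurableSet (measure_ne_top P B)]
          exact tsub_pos_of_lt hBlt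
        · exact ⟨∅, fun h1 h2 => absurd ⟨h1, h2⟩ hS⟩
      choose F hF using key
      set C : ℕ → Set Ω := fun n => (fun S => S \ F S)^[n] A with hC
      have hCsucc : ∀ n, C (n + 1) = C n \ F (C n) := by
        intro n
        simp only [hC, Function.iterate_succ_apply']
      have hC0 : C 0 = A := rfl
      have hCgood : ∀ n, MeasurableSet (C n) ∧ 0 < P (C n) := by
        intro n
        induction n with
        | zero => exact ⟨hAm, pos_iff_ne_zero.mpr hPA⟩
        | succ k ih =>
          obtain ⟨h1, h2, h3, h4⟩ := hF (C k) ih.1 ih.2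
          rw [hCsucc]
          exact ⟨ih.1.diff h2, h4⟩
      set B : ℕ → Set Ω := fun n => F (C n) with hB
      have hBspec : ∀ n, B n ⊆ C n ∧ MeasurableSet (B n) ∧ 0 < P (B n) :=
        fun n => ⟨(hF (C n) (hCgood n).1 (hCgood n).2).1,
          (hF (C n) (hCgood n).1 (hCgood n).2).2.1,
          (hF (C n) (hCgood n).1 (hCgood n).2).2.2.1⟩
      have hCanti : ∀ n k, n ≤ k → C k ⊆ C n := by
        intro n k hnk
        induction k with
        | zero => simp_all
        | succ j ih =>
          rcases Nat.lt_or_ge n (j + 1) with h | h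
          · have h1 : C (j + 1) ⊆ C j := by rw [hCsucc]; exact Set.diff_subset
            exact h1.trans (ih (Nat.lt_succ_iff.mp h))
          · have : n = j + 1 := le_antisymm hnk h
            rw [this]
      have hBA : ∀ n, B n ⊆ A := fun n => ((hBspec n).1.trans (hCanti 0 n (Nat.zero_le _)))
      have hBdisj : ∀ k n, k < n → B n ∩ B k = ∅ := by
        intro k n hkn
        have h1 : B n ⊆ C (k + 1) := (hBspec n).1.trans (hCanti (k + 1) n hkn)
        rw [hCsucc] at h1
        ext ω
        simp only [Set.mem_inter_iff, Set.mem_empty_iff_false, iff_false, not_and]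
        intro hn hk
        exact (h1 hn).2 hk
      -- the piecewise ε
      set v : Ω → ℝ := fun ω => if h : ∃ n, ω ∈ B n then (1 : ℝ) / (Nat.find h + 1) else w ω
        with hv
      have hvB : ∀ n ω, ω ∈ B n → v ω = 1 / (n + 1) := by
        intro n ω hω
        have h : ∃ k, ω ∈ B k := ⟨n, hω⟩
        have hfind : Nat.find h = n := by
          have h1 := Nat.find_spec h
          rcases lt_trichotomy (Nat.find h) n with hlt | heq | hgt
          · exact absurd (Set.mem_inter hω h1)
              (by rw [hBdisj (Nat.find h) n hlt]; exact Set.notMem_empty ω)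
          · exact heq
          · exact absurd (Set.mem_inter h1 hω)
              (by rw [hBdisj n (Nat.find h) hgt]; exact Set.notMem_empty ω)
        simp only [hv, dif_pos h, hfind]
      have hvpos : ∀ ω, 0 < v ω := by
        intro ω
        simp only [hv]
        split_ifs with h
        · positivity
        · exact hwpos ω
      have hvm : Measurable v := by
        intro s hs
        have hset : v ⁻¹' s =
            (⋃ n ∈ {n : ℕ | (1 : ℝ) / (n + 1) ∈ s}, B n) ∪ ((⋃ n, B n)ᶜ ∩ w ⁻¹' s) := by
          ext ω
          by_cases h : ∃ n, ω ∈ B n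
          · obtain ⟨n, hn⟩ := h
            have hvω : v ω = 1 / (n + 1) := hvB n ω hn
            simp only [Set.mem_preimage, hvω, Set.mem_union, Set.mem_iUnion, Set.mem_inter_iff,
              Set.mem_compl_iff, Set.mem_setOf_eq]
            constructor
            · intro hmem
              exact Or.inl ⟨n, hmem, hn⟩
            · rintro (⟨k, hk1, hk2⟩ | ⟨hc, _⟩)
              · have : v ω = 1 / (k + 1) := hvB k ω hk2
                rw [hvω] at this
                rwa [this]
              · exact absurd ⟨n, hn⟩ hc
          · have hvω : v ω = w ω := by simp only [hv, dif_neg h]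
            push_neg at h
            simp only [Set.mem_preimage, hvω, Set.mem_union, Set.mem_iUnion, Set.mem_inter_iff,
              Set.mem_compl_iff, Set.mem_setOf_eq]
            constructor
            · intro hmem
              exact Or.inr ⟨by simpa using h, hmem⟩
            · rintro (⟨k, _, hk2⟩ | ⟨_, hmem⟩)
              · exact absurd hk2 (h k)
              · exact hmem
        rw [hset]
        exact ((MeasurableSet.biUnion (Set.to_countable _) fun n _ => (hBspec n).2.1).union
          (((MeasurableSet.iUnion fun n => (hBspec n).2.1).compl).inter (hwm hs)))
      refine ⟨AEEqFun.mk v hvm.aestronglyMeasurable, ?_, ?_⟩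
      · filter_upwards [AEEqFun.coeFn_mk v hvm.aestronglyMeasurable] with ω hc
        rw [hc]; exact hvpos ω
      · rintro z hz ⟨m, hm, hzM⟩
        obtain ⟨n, hn⟩ := exists_nat_one_div_lt hm
        have hae : ∀ᵐ ω ∂P, |z ω - g ω| ≤ v ω ∧ m < z ω := by
          filter_upwards [hz, hzM, hgy, AEEqFun.coeFn_mk v hvm.aestronglyMeasurable]
            with ω h1 h2 h3 h4
          rw [h4] at h1
          rw [h3] at h1
          exact ⟨h1, h2⟩
        obtain ⟨ω, hω1, hω2, hω3⟩ := exists_mem_of_pos (pos_iff_ne_zero.mp (hBspec n).2.2) hae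
        have hgω : g ω ≤ 0 := hBA n hω1
        have hvω : v ω = 1 / (n + 1) := hvB n ω hω1
        rw [hvω] at hω2
        have := abs_le.mp hω2
        have : z ω ≤ 1 / (n + 1 : ℝ) := by
          push_cast at this
          linarith [this.2]
        linarith [hn]
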